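/- Let m = 0 or m > 2 and i ∈ Z_m. The assignment 𝒦⁺_α ↦ K_{α,i+1}, 𝒦⁻_α ↦ K_{α,i}, μ⁺_M ↦ e_{M,i+1}, μ⁻_M ↦ e_{M,i} extends to an algebra homomorphism from the Heisenberg double Hall algebra HD(A) into the Bridgeland Hall algebra DH_m(A), i.e. the defining relations (2.3)–(2.7) of HD(A) are consequences of the defining relations (4.1)–(4.5) of DH_m(A). -/
import Mathlib


noncomputable section

open scoped TensorProduct

variable {ι : Type*} {K : Type*} [AddCommGroup K]

/-- `gammaHall g a M N X Y = γ^{XY}_{MN} = (a_X a_Y/(a_M a_N)) Σ_{[L]} a_L g^M_{L X} g^N_{Y L}`,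
where `g L M N = g^L_{M N}` are the Hall numbers and `a X = |Aut X|`. -/
def gammaHall (g : ι → ι → ι → ℕ) (a : ι → ℕ) (M N X Y : ι) : ℂ :=
  ((a X * a Y : ℕ) : ℂ) / ((a M * a N : ℕ) : ℂ) *
    ∑ᶠ L : ι, ((a L * g M L X * g N Y L : ℕ) : ℂ)

/-- Generators of the Heisenberg double Hall algebra: `μ⁺_M`, `μ⁻_M`, `K⁺_α`, `K⁻_α`. -/
abbrev HDGen (ι K : Type*) := (ι ⊕ ι) ⊕ (K ⊕ K)

variable (ι K) in
/-- `μ⁺_M` as an element of the free algebra. -/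
def μp (M : ι) : FreeAlgebra ℂ (HDGen ι K) := FreeAlgebra.ι ℂ (Sum.inl (Sum.inl M))
variable (ι K) in
/-- `μ⁻_M` as an element of the free algebra. -/
def μm (M : ι) : FreeAlgebra ℂ (HDGen ι K) := FreeAlgebra.ι ℂ (Sum.inl (Sum.inr M))
variable (ι K) in
/-- `K⁺_α` as an element of the free algebra. -/
def κp (α : K) : FreeAlgebra ℂ (HDGen ι K) := FreeAlgebra.ι ℂ (Sum.inr (Sum.inl α))
variable (ι K) in
/-- `K⁻_α` as an element of the free algebra. -/
def κm (α : K) : FreeAlgebra ℂ (HDGen ι K) := FreeAlgebra.ι ℂ (Sum.inr (Sum.inr α))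

/-- The defining relations (2.3)–(2.7) of the Heisenberg double Hall algebra `HD(A)`. -/
inductive HDRel (g : ι → ι → ι → ℕ) (a : ι → ℕ) (cls : ι → K) (e s : K → K → ℤ) (v : ℂ) :
    FreeAlgebra ℂ (HDGen ι K) → FreeAlgebra ℂ (HDGen ι K) → Prop
  | hallP (M N : ι) : HDRel g a cls e s v (μp ι K M * μp ι K N)
      (∑ᶠ L : ι, (v ^ e (cls M) (cls N) * g L M N) • μp ι K L)
  | hallM (M N : ι) : HDRel g a cls e s v (μm ι K M * μm ι K N)
      (∑ᶠ L : ι, (v ^ e (cls M) (cls N) * g L M N) • μm ι K L)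
  | KpMp (α : K) (M : ι) : HDRel g a cls e s v (κp ι K α * μp ι K M)
      (v ^ s α (cls M) • (μp ι K M * κp ι K α))
  | KmMm (α : K) (M : ι) : HDRel g a cls e s v (κm ι K α * μm ι K M)
      (v ^ s α (cls M) • (μm ι K M * κm ι K α))
  | KpKp (α β : K) : HDRel g a cls e s v (κp ι K α * κp ι K β) (κp ι K (α + β))
  | KmKm (α β : K) : HDRel g a cls e s v (κm ι K α * κm ι K β) (κm ι K (α + β))
  | KpKm (α β : K) : HDRel g a cls e s v (κp ι K α * κm ι K β)
      (v ^ s α β • (κm ι K β * κp ι K α))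
  | KpMm (α : K) (M : ι) : HDRel g a cls e s v (κp ι K α * μm ι K M)
      (μm ι K M * κp ι K α)
  | KmMp (α : K) (M : ι) : HDRel g a cls e s v (κm ι K α * μp ι K M)
      (v ^ (-s α (cls M)) • (μp ι K M * κm ι K α))
  | cross (M N : ι) : HDRel g a cls e s v (μp ι K M * μm ι K N)
      (∑ᶠ p : ι × ι,
        (v ^ e (cls N - cls p.2) (cls p.1 - cls p.2) * gammaHall g a M N p.1 p.2) •
          (κm ι K (cls N - cls p.2) * μm ι K p.2 * μp ι K p.1))

/-- The Heisenberg double Hall algebra `HD(A)`. -/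
def HDAlg (g : ι → ι → ι → ℕ) (a : ι → ℕ) (cls : ι → K) (e s : K → K → ℤ) (v : ℂ) : Type _ :=
  RingQuot (HDRel g a cls e s v)

variable (g : ι → ι → ι → ℕ) (a : ι → ℕ) (cls : ι → K) (e s : K → K → ℤ) (v : ℂ)

instance : Ring (HDAlg g a cls e s v) := inferInstanceAs (Ring (RingQuot _))
instance : Algebra ℂ (HDAlg g a cls e s v) := inferInstanceAs (Algebra ℂ (RingQuot _))

/-- The generator `μ⁺_M` of `HD(A)`. -/
def HDμp (M : ι) : HDAlg g a cls e s v := RingQuot.mkAlgHom ℂ _ (μp ι K M)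
/-- The generator `μ⁻_M` of `HD(A)`. -/
def HDμm (M : ι) : HDAlg g a cls e s v := RingQuot.mkAlgHom ℂ _ (μm ι K M)
/-- The generator `K⁺_α` of `HD(A)`. -/
def HDκp (α : K) : HDAlg g a cls e s v := RingQuot.mkAlgHom ℂ _ (κp ι K α)
/-- The generator `K⁻_α` of `HD(A)`. -/
def HDκm (α : K) : HDAlg g a cls e s v := RingQuot.mkAlgHom ℂ _ (κm ι K α)

/-- Generators of the Bridgeland Hall algebra of `m`-cyclic complexes:
`e_{M,i}` and `K_{α,i}` with `i ∈ Z_m` (where `ZMod 0 = ℤ`). -/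
abbrev DHmGen (ι K : Type*) (m : ℕ) := (ι × ZMod m) ⊕ (K × ZMod m)

variable (ι K) in
/-- `e_{M,i}` as an element of the free algebra. -/
def eGen {m : ℕ} (M : ι) (i : ZMod m) : FreeAlgebra ℂ (DHmGen ι K m) :=
  FreeAlgebra.ι ℂ (Sum.inl (M, i))
variable (ι K) in
/-- `K_{α,i}` as an element of the free algebra. -/
def kGen {m : ℕ} (α : K) (i : ZMod m) : FreeAlgebra ℂ (DHmGen ι K m) :=
  FreeAlgebra.ι ℂ (Sum.inr (α, i))

/-- The defining relations (4.1)–(4.5) of the Bridgeland Hall algebra `DH_m(A)` of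
`m`-cyclic complexes (for `m = 0` or `m > 2`); the condition `i = m - 1 + j` of the
paper is rendered as `j = i + 1` in `Z_m`. -/
inductive DHmRel (m : ℕ) (g : ι → ι → ι → ℕ) (a : ι → ℕ) (cls : ι → K)
    (e s : K → K → ℤ) (v : ℂ) :
    FreeAlgebra ℂ (DHmGen ι K m) → FreeAlgebra ℂ (DHmGen ι K m) → Prop
  | KKsame (α β : K) (i : ZMod m) :
      DHmRel m g a cls e s v (kGen ι K α i * kGen ι K β i) (kGen ι K (α + β) i)
  | KKup (α β : K) (i j : ZMod m) (h : i = j + 1) :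
      DHmRel m g a cls e s v (kGen ι K α i * kGen ι K β j)
        (v ^ s α β • (kGen ι K β j * kGen ι K α i))
  | KKdown (α β : K) (i j : ZMod m) (h : j = i + 1) :
      DHmRel m g a cls e s v (kGen ι K α i * kGen ι K β j)
        (v ^ (-s α β) • (kGen ι K β j * kGen ι K α i))
  | KKother (α β : K) (i j : ZMod m) (h1 : i ≠ j) (h2 : i ≠ j + 1) (h3 : j ≠ i + 1) :
      DHmRel m g a cls e s v (kGen ι K α i * kGen ι K β j) (kGen ι K β j * kGen ι K α i)
  | Kesame (α : K) (M : ι) (i : ZMod m) :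
      DHmRel m g a cls e s v (kGen ι K α i * eGen ι K M i)
        (v ^ s α (cls M) • (eGen ι K M i * kGen ι K α i))
  | Kedown (α : K) (M : ι) (i j : ZMod m) (h : j = i + 1) :
      DHmRel m g a cls e s v (kGen ι K α i * eGen ι K M j)
        (v ^ (-s α (cls M)) • (eGen ι K M j * kGen ι K α i))
  | Keother (α : K) (M : ι) (i j : ZMod m) (h1 : i ≠ j) (h2 : j ≠ i + 1) :
      DHmRel m g a cls e s v (kGen ι K α i * eGen ι K M j) (eGen ι K M j * kGen ι K α i)
  | hall (M N : ι) (i : ZMod m) :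
      DHmRel m g a cls e s v (eGen ι K M i * eGen ι K N i)
        (∑ᶠ L : ι, (v ^ e (cls M) (cls N) * g L M N) • eGen ι K L i)
  | cross (M N : ι) (i : ZMod m) :
      DHmRel m g a cls e s v (eGen ι K M (i + 1) * eGen ι K N i)
        (∑ᶠ p : ι × ι,
          (v ^ e (cls M - cls p.1) (cls p.1 - cls p.2) * gammaHall g a M N p.1 p.2) •
            (kGen ι K (cls M - cls p.1) i * eGen ι K p.2 i * eGen ι K p.1 (i + 1)))
  | ecomm (M N : ι) (i j : ZMod m) (h1 : i ≠ j) (h2 : i ≠ j + 1) (h3 : j ≠ i + 1) :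
      DHmRel m g a cls e s v (eGen ι K M i * eGen ι K N j) (eGen ι K N j * eGen ι K M i)

/-- The Bridgeland Hall algebra `DH_m(A)` of `m`-cyclic complexes. -/
def DHmAlg (m : ℕ) (g : ι → ι → ι → ℕ) (a : ι → ℕ) (cls : ι → K) (e s : K → K → ℤ)
    (v : ℂ) : Type _ :=
  RingQuot (DHmRel m g a cls e s v)

variable (m : ℕ) (g : ι → ι → ι → ℕ) (a : ι → ℕ) (cls : ι → K) (e s : K → K → ℤ) (v : ℂ)

instance : Ring (DHmAlg m g a cls e s v) := inferInstanceAs (Ring (RingQuot _))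
instance : Algebra ℂ (DHmAlg m g a cls e s v) := inferInstanceAs (Algebra ℂ (RingQuot _))

/-- The generator `e_{M,i}` of `DH_m(A)`. -/
def DHme (M : ι) (i : ZMod m) : DHmAlg m g a cls e s v :=
  RingQuot.mkAlgHom ℂ _ (eGen ι K M i)
/-- The generator `K_{α,i}` of `DH_m(A)`. -/
def DHmk (α : K) (i : ZMod m) : DHmAlg m g a cls e s v :=
  RingQuot.mkAlgHom ℂ _ (kGen ι K α i)


section AuxiliaryLemmas

variable {ι : Type*} {K : Type*} [AddCommGroup K]

lemma algHomMapFinsum {A B : Type*} [Semiring A] [Semiring B] [Algebra ℂ A] [Algebra ℂ B]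
    {γ : Type*} (φ : A →ₐ[ℂ] B) {f : γ → A} (hf : (Function.support f).Finite) :
    φ (∑ᶠ x, f x) = ∑ᶠ x, φ (f x) :=
  φ.toRingHom.toAddMonoidHom.map_finsum hf

lemma gammaHall_exists {g : ι → ι → ι → ℕ} {a : ι → ℕ} {M N X Y : ι}
    (h : gammaHall g a M N X Y ≠ 0) : ∃ L, g M L X ≠ 0 ∧ g N Y L ≠ 0 := by
  by_contra hc
  push_neg at hc
  apply h
  unfold gammaHall
  rw [finsum_eq_zero_of_forall_eq_zero, mul_zero]
  intro L
  by_cases h1 : g M L X = 0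
  · simp [h1]
  · simp [hc L h1]

/-- Auxiliary generator translation: HD generators to DH_m generators at level `i`. -/
def hbTau {n : ℕ} (i : ZMod n) : HDGen ι K → DHmGen ι K n
  | Sum.inl (Sum.inl M) => Sum.inl (M, i + 1)
  | Sum.inl (Sum.inr M) => Sum.inl (M, i)
  | Sum.inr (Sum.inl α) => Sum.inr (α, i + 1)
  | Sum.inr (Sum.inr α) => Sum.inr (α, i)

/-- The induced map on free algebras. -/
def hbL {n : ℕ} (i : ZMod n) : FreeAlgebra ℂ (HDGen ι K) →ₐ[ℂ] FreeAlgebra ℂ (DHmGen ι K n) :=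
  FreeAlgebra.lift ℂ (fun x => FreeAlgebra.ι ℂ (hbTau i x))

@[simp] lemma hbL_mup {n : ℕ} (i : ZMod n) (M : ι) :
    hbL (K := K) i (μp ι K M) = eGen ι K M (i + 1) := by
  simp [hbL, μp, eGen, hbTau]

@[simp] lemma hbL_mum {n : ℕ} (i : ZMod n) (M : ι) :
    hbL (K := K) i (μm ι K M) = eGen ι K M i := by
  simp [hbL, μm, eGen, hbTau]

@[simp] lemma hbL_kp {n : ℕ} (i : ZMod n) (α : K) :
    hbL (ι := ι) i (κp ι K α) = kGen ι K α (i + 1) := by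
  simp [hbL, κp, kGen, hbTau]

@[simp] lemma hbL_km {n : ℕ} (i : ZMod n) (α : K) :
    hbL (ι := ι) i (κm ι K α) = kGen ι K α i := by
  simp [hbL, κm, kGen, hbTau]

lemma eGen_ne_zero {n : ℕ} (M : ι) (i : ZMod n) : eGen ι K M i ≠ 0 := by
  simpa [eGen] using FreeAlgebra.ι_ne_zero (R := ℂ) (Sum.inl (M, i) : DHmGen ι K n)

lemma kGen_ne_zero {n : ℕ} (α : K) (i : ZMod n) : kGen ι K α i ≠ 0 := by
  simpa [kGen] using FreeAlgebra.ι_ne_zero (R := ℂ) (Sum.inr (α, i) : DHmGen ι K n)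

lemma mup_ne_zero (M : ι) : μp ι K M ≠ 0 := by
  simpa [μp] using FreeAlgebra.ι_ne_zero (R := ℂ) (Sum.inl (Sum.inl M) : HDGen ι K)

lemma mum_ne_zero (M : ι) : μm ι K M ≠ 0 := by
  simpa [μm] using FreeAlgebra.ι_ne_zero (R := ℂ) (Sum.inl (Sum.inr M) : HDGen ι K)

lemma km_ne_zero (α : K) : κm ι K α ≠ (0 : FreeAlgebra ℂ (HDGen ι K)) := by
  simpa [κm] using FreeAlgebra.ι_ne_zero (R := ℂ) (Sum.inr (Sum.inr α) : HDGen ι K)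

end AuxiliaryLemmas

/-- for `m = 0` or `m > 2` and `i ∈ Z_m`, the assignment
`𝒦⁺_α ↦ K_{α,i+1}`, `𝒦⁻_α ↦ K_{α,i}`, `μ⁺_M ↦ e_{M,i+1}`, `μ⁻_M ↦ e_{M,i}`
extends to an algebra homomorphism from the Heisenberg double Hall algebra `HD(A)`
to the Bridgeland Hall algebra `DH_m(A)`. -/
theorem heisenberg_to_bridgeland [DecidableEq ι]
    (m : ℕ) (hm : m = 0 ∨ 2 < m) (i : ZMod m)
    (z : ι) (hv : v ≠ 0)
    (heL : ∀ α β γ' : K, e (α + β) γ' = e α γ' + e β γ')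
    (heR : ∀ α β γ' : K, e α (β + γ') = e α β + e α γ')
    (hsym : ∀ α β : K, s α β = e α β + e β α)
    (ha : ∀ M : ι, a M ≠ 0)
    (hgfin : ∀ M N : ι, (Function.support fun L => g L M N).Finite)
    (hqfin : ∀ M X : ι, (Function.support fun L => g M L X).Finite)
    (hcls : ∀ L M N : ι, g L M N ≠ 0 → cls L = cls M + cls N)
    (hclsz : cls z = 0)
    (hzl : ∀ L M : ι, g L z M = if L = M then 1 else 0)
    (hzr : ∀ L M : ι, g L M z = if L = M then 1 else 0)
    (hcomp : ∀ L M N P : ι,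
      ∑ᶠ X : ι, g L M X * g X N P = ∑ᶠ X : ι, g X M N * g L X P)
    (hgreen : ∀ M N M' N' : ι,
      ((a M * a N * a M' * a N' : ℕ) : ℂ) *
          ∑ᶠ L : ι, ((g L M N * g L M' N' : ℕ) : ℂ) / ((a L : ℕ) : ℂ) =
        ∑ᶠ q : ι × ι × ι × ι,
          v ^ (-2 * e (cls q.1) (cls q.2.2.2)) *
            ((g M q.1 q.2.1 * g N q.2.2.1 q.2.2.2 * g M' q.1 q.2.2.1 *
              g N' q.2.1 q.2.2.2 : ℕ) : ℂ) *
            ((a q.1 * a q.2.1 * a q.2.2.1 * a q.2.2.2 : ℕ) : ℂ)) :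
    ∃ F : HDAlg g a cls e s v →ₐ[ℂ] DHmAlg m g a cls e s v,
      (∀ α : K, F (HDκp g a cls e s v α) = DHmk m g a cls e s v α (i + 1)) ∧
      (∀ α : K, F (HDκm g a cls e s v α) = DHmk m g a cls e s v α i) ∧
      (∀ M : ι, F (HDμp g a cls e s v M) = DHme m g a cls e s v M (i + 1)) ∧
      (∀ M : ι, F (HDμm g a cls e s v M) = DHme m g a cls e s v M i) := by
  classical
  have hone : (1 : ZMod m) ≠ 0 := by
    intro hh
    have hd : m ∣ 1 := (ZMod.natCast_eq_zero_iff 1 m).mp (by exact_mod_cast hh)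
    rcases hm with h | h
    · subst h; simp at hd
    · have := Nat.le_of_dvd one_pos hd; omega
  have htwo : (2 : ZMod m) ≠ 0 := by
    intro hh
    have hd : m ∣ 2 := (ZMod.natCast_eq_zero_iff 2 m).mp (by exact_mod_cast hh)
    rcases hm with h | h
    · subst h; simp at hd
    · have := Nat.le_of_dvd two_pos hd; omega
  have hne1 : ∀ j : ZMod m, j + 1 ≠ j := fun j hh => hone (by linear_combination hh)
  have hne2 : ∀ j : ZMod m, j ≠ j + 1 + 1 := fun j hh => htwo (by linear_combination -hh)
  let mkh := RingQuot.mkAlgHom ℂ (DHmRel m g a cls e s v)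
  let f : FreeAlgebra ℂ (HDGen ι K) →ₐ[ℂ] DHmAlg m g a cls e s v := mkh.comp (hbL i)
  have hf : ∀ x, f x = mkh (hbL i x) := fun _ => rfl
  have hmk : ∀ {x y}, DHmRel m g a cls e s v x y → mkh x = mkh y :=
    fun h => RingQuot.mkAlgHom_rel ℂ h
  have hrel : ∀ ⦃x y⦄, HDRel g a cls e s v x y → f x = f y := by
    intro x y h
    cases h with
    | hallP M N =>
      rw [hf, hf]
      have hs : (Function.support fun L : ι =>
          (v ^ e (cls M) (cls N) * (g L M N : ℂ)) • μp ι K L).Finite := by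
        apply (hgfin M N).subset
        intro L hL
        simp only [Function.mem_support] at hL ⊢
        intro h0
        apply hL
        rw [h0]
        simp
      have h1 : hbL (K := K) i (μp ι K M * μp ι K N) =
          eGen ι K M (i + 1) * eGen ι K N (i + 1) := by
        rw [map_mul, hbL_mup, hbL_mup]
      have h2 : hbL (K := K) i
          (∑ᶠ L : ι, (v ^ e (cls M) (cls N) * (g L M N : ℂ)) • μp ι K L) =
          ∑ᶠ L : ι, (v ^ e (cls M) (cls N) * (g L M N : ℂ)) • eGen ι K L (i + 1) := by
        rw [algHomMapFinsum _ hs]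
        exact finsum_congr fun L => by rw [map_smul, hbL_mup]
      rw [h1, h2]
      exact hmk (DHmRel.hall M N (i + 1))
    | hallM M N =>
      rw [hf, hf]
      have hs : (Function.support fun L : ι =>
          (v ^ e (cls M) (cls N) * (g L M N : ℂ)) • μm ι K L).Finite := by
        apply (hgfin M N).subset
        intro L hL
        simp only [Function.mem_support] at hL ⊢
        intro h0
        apply hL
        rw [h0]
        simp
      have h1 : hbL (K := K) i (μm ι K M * μm ι K N) =
          eGen ι K M i * eGen ι K N i := by
        rw [map_mul, hbL_mum, hbL_mum]
      have h2 : hbL (K := K) i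
          (∑ᶠ L : ι, (v ^ e (cls M) (cls N) * (g L M N : ℂ)) • μm ι K L) =
          ∑ᶠ L : ι, (v ^ e (cls M) (cls N) * (g L M N : ℂ)) • eGen ι K L i := by
        rw [algHomMapFinsum _ hs]
        exact finsum_congr fun L => by rw [map_smul, hbL_mum]
      rw [h1, h2]
      exact hmk (DHmRel.hall M N i)
    | KpMp α M =>
      rw [hf, hf]
      have h1 : hbL (K := K) i (κp ι K α * μp ι K M) =
          kGen ι K α (i + 1) * eGen ι K M (i + 1) := by
        rw [map_mul, hbL_kp, hbL_mup]
      have h2 : hbL (K := K) i (v ^ s α (cls M) • (μp ι K M * κp ι K α)) =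
          v ^ s α (cls M) • (eGen ι K M (i + 1) * kGen ι K α (i + 1)) := by
        rw [map_smul, map_mul, hbL_kp, hbL_mup]
      rw [h1, h2]
      exact hmk (DHmRel.Kesame α M (i + 1))
    | KmMm α M =>
      rw [hf, hf]
      have h1 : hbL (K := K) i (κm ι K α * μm ι K M) =
          kGen ι K α i * eGen ι K M i := by
        rw [map_mul, hbL_km, hbL_mum]
      have h2 : hbL (K := K) i (v ^ s α (cls M) • (μm ι K M * κm ι K α)) =
          v ^ s α (cls M) • (eGen ι K M i * kGen ι K α i) := by
        rw [map_smul, map_mul, hbL_km, hbL_mum]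
      rw [h1, h2]
      exact hmk (DHmRel.Kesame α M i)
    | KpKp α β =>
      rw [hf, hf]
      have h1 : hbL (ι := ι) i (κp ι K α * κp ι K β) =
          kGen ι K α (i + 1) * kGen ι K β (i + 1) := by
        rw [map_mul, hbL_kp, hbL_kp]
      rw [h1, hbL_kp]
      exact hmk (DHmRel.KKsame α β (i + 1))
    | KmKm α β =>
      rw [hf, hf]
      have h1 : hbL (ι := ι) i (κm ι K α * κm ι K β) =
          kGen ι K α i * kGen ι K β i := by
        rw [map_mul, hbL_km, hbL_km]
      rw [h1, hbL_km]
      exact hmk (DHmRel.KKsame α β i)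
    | KpKm α β =>
      rw [hf, hf]
      have h1 : hbL (ι := ι) i (κp ι K α * κm ι K β) =
          kGen ι K α (i + 1) * kGen ι K β i := by
        rw [map_mul, hbL_kp, hbL_km]
      have h2 : hbL (ι := ι) i (v ^ s α β • (κm ι K β * κp ι K α)) =
          v ^ s α β • (kGen ι K β i * kGen ι K α (i + 1)) := by
        rw [map_smul, map_mul, hbL_kp, hbL_km]
      rw [h1, h2]
      exact hmk (DHmRel.KKup α β (i + 1) i rfl)
    | KpMm α M =>
      rw [hf, hf]
      have h1 : hbL (K := K) i (κp ι K α * μm ι K M) =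
          kGen ι K α (i + 1) * eGen ι K M i := by
        rw [map_mul, hbL_kp, hbL_mum]
      have h2 : hbL (K := K) i (μm ι K M * κp ι K α) =
          eGen ι K M i * kGen ι K α (i + 1) := by
        rw [map_mul, hbL_kp, hbL_mum]
      rw [h1, h2]
      exact hmk (DHmRel.Keother α M (i + 1) i (hne1 i) (hne2 i))
    | KmMp α M =>
      rw [hf, hf]
      have h1 : hbL (K := K) i (κm ι K α * μp ι K M) =
          kGen ι K α i * eGen ι K M (i + 1) := by
        rw [map_mul, hbL_km, hbL_mup]
      have h2 : hbL (K := K) i (v ^ (-s α (cls M)) • (μp ι K M * κm ι K α)) =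
          v ^ (-s α (cls M)) • (eGen ι K M (i + 1) * kGen ι K α i) := by
        rw [map_smul, map_mul, hbL_km, hbL_mup]
      rw [h1, h2]
      exact hmk (DHmRel.Kedown α M i (i + 1) rfl)
    | cross M N =>
      rw [hf, hf]
      have h1 : hbL (K := K) i (μp ι K M * μm ι K N) =
          eGen ι K M (i + 1) * eGen ι K N i := by
        rw [map_mul, hbL_mup, hbL_mum]
      have hγ : ∀ p : ι × ι, gammaHall g a M N p.1 p.2 ≠ 0 →
          cls N - cls p.2 = cls M - cls p.1 := by
        intro p hp
        obtain ⟨L, hL1, hL2⟩ := gammaHall_exists hp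
        rw [hcls M L p.1 hL1, hcls N p.2 L hL2]
        abel
      have h2 : hbL (K := K) i
          (∑ᶠ p : ι × ι,
            (v ^ e (cls N - cls p.2) (cls p.1 - cls p.2) * gammaHall g a M N p.1 p.2) •
              (κm ι K (cls N - cls p.2) * μm ι K p.2 * μp ι K p.1)) =
          ∑ᶠ p : ι × ι,
            (v ^ e (cls M - cls p.1) (cls p.1 - cls p.2) * gammaHall g a M N p.1 p.2) •
              (kGen ι K (cls M - cls p.1) i * eGen ι K p.2 i * eGen ι K p.1 (i + 1)) := by
        by_cases hfin : (Function.support fun p : ι × ι => gammaHall g a M N p.1 p.2).Finite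
        · rw [algHomMapFinsum _ (hfin.subset ?_)]
          · apply finsum_congr
            intro p
            by_cases hp : gammaHall g a M N p.1 p.2 = 0
            · rw [hp]
              simp
            · rw [map_smul, map_mul, map_mul, hbL_km, hbL_mum, hbL_mup, hγ p hp]
          · intro p hp
            simp only [Function.mem_support] at hp ⊢
            intro h0
            apply hp
            rw [h0, mul_zero, zero_smul]
        · have hsub1 : (Function.support fun p : ι × ι => gammaHall g a M N p.1 p.2) ⊆
              Function.support fun p : ι × ι =>
                (v ^ e (cls N - cls p.2) (cls p.1 - cls p.2) * gammaHall g a M N p.1 p.2) •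
                  (κm ι K (cls N - cls p.2) * μm ι K p.2 * μp ι K p.1) := by
            intro p hp
            simp only [Function.mem_support] at hp ⊢
            exact smul_ne_zero (mul_ne_zero (zpow_ne_zero _ hv) hp)
              (mul_ne_zero (mul_ne_zero (km_ne_zero _) (mum_ne_zero _)) (mup_ne_zero _))
          have hsub2 : (Function.support fun p : ι × ι => gammaHall g a M N p.1 p.2) ⊆
              Function.support fun p : ι × ι =>
                (v ^ e (cls M - cls p.1) (cls p.1 - cls p.2) * gammaHall g a M N p.1 p.2) •
                  (kGen ι K (cls M - cls p.1) i * eGen ι K p.2 i * eGen ι K p.1 (i + 1)) := by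
            intro p hp
            simp only [Function.mem_support] at hp ⊢
            exact smul_ne_zero (mul_ne_zero (zpow_ne_zero _ hv) hp)
              (mul_ne_zero (mul_ne_zero (kGen_ne_zero _ _) (eGen_ne_zero _ _))
                (eGen_ne_zero _ _))
          rw [finsum_of_infinite_support (fun h => hfin (h.subset hsub1)),
            finsum_of_infinite_support (fun h => hfin (h.subset hsub2)), map_zero]
      rw [h1, h2]
      exact hmk (DHmRel.cross M N i)
  refine ⟨RingQuot.liftAlgHom ℂ ⟨f, hrel⟩, fun α => ?_, fun α => ?_, fun M => ?_, fun M => ?_⟩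
  · unfold HDκp DHmk
    exact (RingQuot.liftAlgHom_mkAlgHom_apply (S := ℂ) f hrel _).trans (by rw [hf, hbL_kp])
  · unfold HDκm DHmk
    exact (RingQuot.liftAlgHom_mkAlgHom_apply (S := ℂ) f hrel _).trans (by rw [hf, hbL_km])
  · unfold HDμp DHme
    exact (RingQuot.liftAlgHom_mkAlgHom_apply (S := ℂ) f hrel _).trans (by rw [hf, hbL_mup])
  · unfold HDμm DHme
    exact (RingQuot.liftAlgHom_mkAlgHom_apply (S := ℂ) f hrel _).trans (by rw [hf, hbL_mum])


end
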